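/- For every integer n ≥ 0 and every real x, the probabilists' Hermite polynomial admits the integral representation Heₙ(x) = (1/√(2π)) ∫_{−∞}^{∞} (x + iy)ⁿ e^{−y²/2} dy, where the integral is taken in ℂ and equals the real number Heₙ(x). -/

import Mathlib

open MeasureTheory


open Polynomial Complex in
private lemma my_derivative_hermite : ∀ n : ℕ,
    derivative (hermite (n + 1)) = C ((n : ℤ) + 1) * hermite n := by
  intro n
  induction n with
  | zero => simp [hermite_one, hermite_zero]
  | succ n ih =>
    rw [hermite_succ (n + 1)]
    rw [derivative_sub, derivative_mul, derivative_X, ih, one_mul]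
    rw [derivative_mul, derivative_C, hermite_succ n]
    push_cast
    rw [show Polynomial.C ((n:ℤ) + 1 + 1) = Polynomial.C ((n:ℤ) + 1) + 1 by
      rw [← Polynomial.C_1, ← Polynomial.C_add]]
    ring

open Polynomial in
private lemma aeval_hermite_rec (n : ℕ) (x : ℝ) :
    aeval x (hermite (n + 2)) =
      x * aeval x (hermite (n + 1)) - ((n : ℝ) + 1) * aeval x (hermite n) := by
  rw [hermite_succ (n + 1), my_derivative_hermite]
  simp only [map_sub, map_mul, aeval_X, aeval_C]
  push_cast
  ring

private lemma g_int (m : ℕ) :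
    Integrable (fun y : ℝ => |y| ^ m * Real.exp (-(y ^ 2) / 2)) := by
  have h4 : Integrable (fun y : ℝ => Real.exp (-(4 : ℝ)⁻¹ * y ^ 2)) :=
    integrable_exp_neg_mul_sq (by norm_num)
  apply Integrable.mono' (h4.const_mul (Real.exp ((m : ℝ) ^ 2)))
  · exact (Continuous.mul (by continuity) (by continuity)).aestronglyMeasurable
  · filter_upwards with y
    have h0 : |y| ^ m ≤ Real.exp ((m : ℝ) * |y|) := by
      calc |y| ^ m ≤ (Real.exp |y|) ^ m := by
            apply pow_le_pow_left₀ (abs_nonneg y)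
            linarith [Real.add_one_le_exp |y|]
        _ = Real.exp ((m : ℝ) * |y|) := by rw [← Real.exp_nat_mul]
    have h1 : (m : ℝ) * |y| ≤ y ^ 2 / 4 + (m : ℝ) ^ 2 := by
      nlinarith [sq_nonneg (|y| / 2 - (m : ℝ)), sq_abs y]
    have h2 : |y| ^ m ≤ Real.exp ((m : ℝ) ^ 2) * Real.exp (y ^ 2 / 4) := by
      rw [← Real.exp_add]
      exact h0.trans (Real.exp_le_exp.2 (by linarith))
    rw [Real.norm_eq_abs, abs_of_nonneg (by positivity)]
    calc |y| ^ m * Real.exp (-(y ^ 2) / 2)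
        ≤ (Real.exp ((m : ℝ) ^ 2) * Real.exp (y ^ 2 / 4)) * Real.exp (-(y ^ 2) / 2) :=
          mul_le_mul_of_nonneg_right h2 (Real.exp_pos _).le
      _ = Real.exp ((m : ℝ) ^ 2) * Real.exp (-(4 : ℝ)⁻¹ * y ^ 2) := by
          rw [mul_assoc, ← Real.exp_add]; ring_nf

private lemma my_norm_pow_le (n : ℕ) (x y : ℝ) :
    ‖((x : ℂ) + Complex.I * y) ^ n‖ ≤ (|x| + 1) ^ n * (2 ^ n * (1 + |y| ^ n)) := by
  have hb : ‖(x : ℂ) + Complex.I * y‖ ≤ |x| + |y| := by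
    refine (norm_add_le _ _).trans ?_
    simp
  have h1 : ‖((x : ℂ) + Complex.I * y) ^ n‖ ≤ (|x| + |y|) ^ n := by
    rw [norm_pow]
    exact pow_le_pow_left₀ (norm_nonneg _) hb n
  have h2 : (|x| + |y|) ^ n ≤ ((|x| + 1) * (|y| + 1)) ^ n := by
    apply pow_le_pow_left₀ (by positivity)
    nlinarith [abs_nonneg x, abs_nonneg y]
  have h3 : (|y| + 1) ^ n ≤ 2 ^ n * (1 + |y| ^ n) := by
    rcases le_total (|y|) 1 with h | h
    · calc (|y| + 1) ^ n ≤ 2 ^ n := pow_le_pow_left₀ (by positivity) (by linarith) n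
        _ ≤ 2 ^ n * (1 + |y| ^ n) := le_mul_of_one_le_right (by positivity)
            (le_add_of_nonneg_right (by positivity))
    · calc (|y| + 1) ^ n ≤ (2 * |y|) ^ n := pow_le_pow_left₀ (by positivity) (by linarith) n
        _ = 2 ^ n * |y| ^ n := mul_pow 2 _ n
        _ ≤ 2 ^ n * (1 + |y| ^ n) := by
            have : (0:ℝ) ≤ 2 ^ n := by positivity
            nlinarith
  calc ‖((x : ℂ) + Complex.I * y) ^ n‖ ≤ ((|x| + 1) * (|y| + 1)) ^ n := h1.trans h2
    _ = (|x| + 1) ^ n * (|y| + 1) ^ n := mul_pow _ _ n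
    _ ≤ (|x| + 1) ^ n * (2 ^ n * (1 + |y| ^ n)) := by
        apply mul_le_mul_of_nonneg_left h3 (by positivity)

private lemma cexp_ofReal (y : ℝ) :
    Complex.exp (-(y : ℂ) ^ 2 / 2) = ((Real.exp (-(y ^ 2) / 2) : ℝ) : ℂ) := by
  rw [Complex.ofReal_exp]
  push_cast
  ring_nf

private lemma int_main (n m : ℕ) (x : ℝ) :
    Integrable (fun y : ℝ =>
      ((x : ℂ) + Complex.I * y) ^ n * ((y : ℂ) ^ m * Complex.exp (-(y : ℂ) ^ 2 / 2))) := by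
  set C : ℝ := (|x| + 1) ^ n * 2 ^ n with hC
  have hint : Integrable (fun y : ℝ =>
      C * (|y| ^ m * Real.exp (-(y ^ 2) / 2) + |y| ^ (n + m) * Real.exp (-(y ^ 2) / 2))) :=
    ((g_int m).add (g_int (n + m))).const_mul C
  apply Integrable.mono' hint
  · apply Continuous.aestronglyMeasurable
    continuity
  · filter_upwards with y
    have hnorm : ‖((x : ℂ) + Complex.I * y) ^ n * ((y : ℂ) ^ m * Complex.exp (-(y : ℂ) ^ 2 / 2))‖
        = ‖((x : ℂ) + Complex.I * y) ^ n‖ * (|y| ^ m * Real.exp (-(y ^ 2) / 2)) := by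
      rw [cexp_ofReal, norm_mul, norm_mul, norm_pow ((y:ℂ)) m, Complex.norm_real,
        Complex.norm_real, Real.norm_eq_abs, Real.norm_eq_abs,
        abs_of_nonneg (Real.exp_pos _).le]
    rw [hnorm]
    have h1 := my_norm_pow_le n x y
    have h2 : (0:ℝ) ≤ |y| ^ m * Real.exp (-(y ^ 2) / 2) := by positivity
    calc ‖((x : ℂ) + Complex.I * y) ^ n‖ * (|y| ^ m * Real.exp (-(y ^ 2) / 2))
        ≤ ((|x| + 1) ^ n * (2 ^ n * (1 + |y| ^ n))) * (|y| ^ m * Real.exp (-(y ^ 2) / 2)) :=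
          mul_le_mul_of_nonneg_right h1 h2
      _ = C * (|y| ^ m * Real.exp (-(y ^ 2) / 2) + |y| ^ (n + m) * Real.exp (-(y ^ 2) / 2)) := by
          rw [hC, pow_add]; ring

private lemma int_shape (n : ℕ) (x : ℝ) :
    Integrable (fun y : ℝ => ((x : ℂ) + Complex.I * y) ^ n * Complex.exp (-(y : ℂ) ^ 2 / 2)) := by
  have h := int_main n 0 x
  simpa using h

private lemma int_shape1 (n : ℕ) (x : ℝ) :
    Integrable (fun y : ℝ =>
      (Complex.I * y) * (((x : ℂ) + Complex.I * y) ^ n * Complex.exp (-(y : ℂ) ^ 2 / 2))) := by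
  refine ((int_main n 1 x).const_mul Complex.I).congr ?_
  filter_upwards with t
  simp only [pow_one]
  ring

private lemma hasDerivAt_u (n : ℕ) (x : ℝ) (t : ℝ) :
    HasDerivAt (fun s : ℝ => Complex.I * ((x : ℂ) + Complex.I * s) ^ n)
      (Complex.I * ((n : ℂ) * ((x : ℂ) + Complex.I * t) ^ (n - 1) * (Complex.I * 1))) t := by
  have h1 : HasDerivAt (fun z : ℂ => (x : ℂ) + Complex.I * z) (Complex.I * 1) (t : ℂ) :=
    ((hasDerivAt_id (t : ℂ)).const_mul Complex.I).const_add (x : ℂ)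
  have h2 := ((h1.pow n).const_mul Complex.I).comp_ofReal
  exact h2

private lemma hasDerivAt_v (t : ℝ) :
    HasDerivAt (fun s : ℝ => -Complex.exp (-(s : ℂ) ^ 2 / 2))
      ((t : ℂ) * Complex.exp (-(t : ℂ) ^ 2 / 2)) t := by
  have h1 : HasDerivAt (fun z : ℂ => -z ^ 2 / 2) (-(2 * (t : ℂ) ^ 1) / 2) (t : ℂ) :=
    ((hasDerivAt_pow 2 (t : ℂ)).neg).div_const 2
  have h2 := (h1.cexp.neg).comp_ofReal
  convert h2 using 1
  · rfl
  ring

private lemma ibp (n : ℕ) (x : ℝ) :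
    (∫ y : ℝ, (Complex.I * y) * (((x : ℂ) + Complex.I * y) ^ n * Complex.exp (-(y : ℂ) ^ 2 / 2)))
      = -(n : ℂ) *
        ∫ y : ℝ, ((x : ℂ) + Complex.I * y) ^ (n - 1) * Complex.exp (-(y : ℂ) ^ 2 / 2) := by
  set u : ℝ → ℂ := fun s => Complex.I * ((x : ℂ) + Complex.I * s) ^ n with hu_def
  set u' : ℝ → ℂ := fun s =>
    Complex.I * ((n : ℂ) * ((x : ℂ) + Complex.I * s) ^ (n - 1) * (Complex.I * 1)) with hu'_def
  set v : ℝ → ℂ := fun s => -Complex.exp (-(s : ℂ) ^ 2 / 2) with hv_def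
  set v' : ℝ → ℂ := fun s => (s : ℂ) * Complex.exp (-(s : ℂ) ^ 2 / 2) with hv'_def
  have hu : ∀ t : ℝ, HasDerivAt u (u' t) t := fun t => hasDerivAt_u n x t
  have hv : ∀ t : ℝ, HasDerivAt v (v' t) t := fun t => hasDerivAt_v t
  have h1 : Integrable (u * v') := by
    refine ((int_main n 1 x).const_mul Complex.I).congr ?_
    filter_upwards with t
    simp only [hu_def, hv'_def, Pi.mul_apply, pow_one]
    ring
  have h2 : Integrable (u' * v) := by
    refine ((int_main (n - 1) 0 x).const_mul ((n : ℂ))).congr ?_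
    filter_upwards with t
    simp only [hu'_def, hv_def, Pi.mul_apply, pow_zero, one_mul, mul_one]
    linear_combination
      ((n : ℂ) * ((x : ℂ) + Complex.I * t) ^ (n - 1) * Complex.exp (-(t : ℂ) ^ 2 / 2)) *
        Complex.I_sq
  have h3 : Integrable (u * v) := by
    refine ((int_main n 0 x).const_mul (-Complex.I)).congr ?_
    filter_upwards with t
    simp only [hu_def, hv_def, Pi.mul_apply, pow_zero, one_mul]
    ring
  have key := integral_mul_deriv_eq_deriv_mul_of_integrable (fun t _ => hu t) (fun t _ => hv t) h1 h2 h3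
  calc (∫ y : ℝ, (Complex.I * y) *
          (((x : ℂ) + Complex.I * y) ^ n * Complex.exp (-(y : ℂ) ^ 2 / 2)))
      = ∫ y : ℝ, u y * v' y := by
        apply integral_congr_ae
        filter_upwards with t
        simp only [hu_def, hv'_def]
        ring
    _ = -∫ y : ℝ, u' y * v y := key
    _ = -∫ y : ℝ, (n : ℂ) *
          (((x : ℂ) + Complex.I * y) ^ (n - 1) * Complex.exp (-(y : ℂ) ^ 2 / 2)) := by
        congr 1
        apply integral_congr_ae
        filter_upwards with t
        simp only [hu'_def, hv_def, mul_one]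
        linear_combination
          (-1 : ℂ) * ((n : ℂ) * ((x : ℂ) + Complex.I * t) ^ (n - 1) *
            Complex.exp (-(t : ℂ) ^ 2 / 2)) * Complex.I_sq
    _ = -(n : ℂ) *
          ∫ y : ℝ, ((x : ℂ) + Complex.I * y) ^ (n - 1) * Complex.exp (-(y : ℂ) ^ 2 / 2) := by
        rw [integral_const_mul]; ring

private lemma base0 :
    (∫ y : ℝ, Complex.exp (-(y : ℂ) ^ 2 / 2)) = ((Real.sqrt (2 * Real.pi) : ℝ) : ℂ) := by
  calc (∫ y : ℝ, Complex.exp (-(y : ℂ) ^ 2 / 2))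
      = ∫ y : ℝ, ((Real.exp (-(y ^ 2) / 2) : ℝ) : ℂ) := by
        apply integral_congr_ae
        filter_upwards with y
        exact cexp_ofReal y
    _ = ((∫ y : ℝ, Real.exp (-(y ^ 2) / 2) : ℝ) : ℂ) := integral_ofReal
    _ = ((Real.sqrt (2 * Real.pi) : ℝ) : ℂ) := by
        norm_cast
        have : (fun y : ℝ => Real.exp (-(y ^ 2) / 2))
            = fun y : ℝ => Real.exp (-(1/2 : ℝ) * y ^ 2) := by
          funext y; ring_nf
        rw [this, integral_gaussian]
        congr 1
        rw [eq_comm, show Real.pi / (1/2 : ℝ) = 2 * Real.pi by ring]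

open Polynomial in
private lemma main_pair : ∀ n : ℕ,
    (∀ x : ℝ, (∫ y : ℝ, ((x : ℂ) + Complex.I * y) ^ n * Complex.exp (-(y : ℂ) ^ 2 / 2))
        = ((Real.sqrt (2 * Real.pi) * aeval x (hermite n) : ℝ) : ℂ)) ∧
    (∀ x : ℝ, (∫ y : ℝ, ((x : ℂ) + Complex.I * y) ^ (n + 1) * Complex.exp (-(y : ℂ) ^ 2 / 2))
        = ((Real.sqrt (2 * Real.pi) * aeval x (hermite (n + 1)) : ℝ) : ℂ)) := by
  have step : ∀ k : ℕ, ∀ x : ℝ,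
      (∫ y : ℝ, ((x : ℂ) + Complex.I * y) ^ (k + 1) * Complex.exp (-(y : ℂ) ^ 2 / 2))
        = (x : ℂ) * (∫ y : ℝ, ((x : ℂ) + Complex.I * y) ^ k * Complex.exp (-(y : ℂ) ^ 2 / 2))
          - (k : ℂ) * ∫ y : ℝ, ((x : ℂ) + Complex.I * y) ^ (k - 1) *
              Complex.exp (-(y : ℂ) ^ 2 / 2) := by
    intro k x
    have hsplit : (∫ y : ℝ, ((x : ℂ) + Complex.I * y) ^ (k + 1) * Complex.exp (-(y : ℂ) ^ 2 / 2))
        = ∫ y : ℝ, ((x : ℂ) * (((x : ℂ) + Complex.I * y) ^ k * Complex.exp (-(y : ℂ) ^ 2 / 2))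
            + (Complex.I * y) * (((x : ℂ) + Complex.I * y) ^ k *
                Complex.exp (-(y : ℂ) ^ 2 / 2))) := by
      apply integral_congr_ae
      filter_upwards with t
      rw [pow_succ]
      ring
    rw [hsplit, integral_add ((int_shape k x).const_mul _) (int_shape1 k x),
      integral_const_mul, ibp k x]
    ring
  intro n
  induction n with
  | zero =>
    constructor
    · intro x
      simp only [pow_zero, one_mul, hermite_zero, map_one, mul_one]
      exact base0
    · intro x
      rw [step 0 x]
      simp only [Nat.cast_zero, zero_mul, sub_zero, pow_zero, one_mul, base0]
      rw [hermite_one, aeval_X]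
      push_cast
      ring
  | succ n ih =>
    refine ⟨ih.2, ?_⟩
    intro x
    rw [step (n + 1) x]
    simp only [Nat.add_sub_cancel]
    rw [ih.1 x, ih.2 x, show n + 1 + 1 = n + 2 from rfl, aeval_hermite_rec n x]
    push_cast
    ring

/-- Probabilists' Hermite polynomial `Heₙ(x) = (−1)ⁿ e^{x²/2} dⁿ/dxⁿ e^{−x²/2}`. -/
noncomputable def He (n : ℕ) (x : ℝ) : ℝ :=
  (-1) ^ n * Real.exp (x ^ 2 / 2) * iteratedDeriv n (fun y => Real.exp (-(y ^ 2) / 2)) x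

open Polynomial in
private lemma He_eq (n : ℕ) (x : ℝ) : He n x = aeval x (hermite n) := by
  rw [hermite_eq_deriv_gaussian', He, iteratedDeriv_eq_iterate]
  have : (fun y : ℝ => Real.exp (-(y ^ 2) / 2)) = fun y : ℝ => Real.exp (-(y ^ 2 / 2)) := by
    funext y; ring_nf
  rw [this]
  ring

theorem stmt_4 (n : ℕ) (x : ℝ) :
    (He n x : ℂ) = (1 / Real.sqrt (2 * Real.pi) : ℝ) *
      ∫ y : ℝ, ((x : ℂ) + Complex.I * (y : ℂ)) ^ n * Complex.exp (-(y : ℂ) ^ 2 / 2) := by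
  rw [(main_pair n).1 x, He_eq, ← Complex.ofReal_mul]
  norm_cast
  have h : Real.sqrt (2 * Real.pi) ≠ 0 :=
    ne_of_gt (Real.sqrt_pos.2 (by positivity))
  field_simp
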